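/- Let a : Δ_T → L(W,W) be a family of bounded linear operators satisfying, for all 0 ≤ s ≤ τ ≤ t ≤ T and all x ∈ W, the relation a_{ts}(x) − a_{tτ}(x) − S(t−τ)(a_{τs}(x)) = a_{tτ}(S(τ−s)x − x). Then for every 0 ≤ s ≤ t ≤ T, every partition s = t₀ < t₁ < ⋯ < t_n = t of [s,t], and every x ∈ W, one has a_{ts}(x) = ∑_{k=0}^{n−1} S(t − t_{k+1})( a_{t_{k+1} t_k}( S(t_k − s) x ) ). -/
import Mathlib


/-- Partition identity `a_{ts}(x) = ∑ S(t−t_{k+1}) a_{t_{k+1}t_k}(S(t_k−s)x)`. -/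
theorem a_partition_sum_identity
    {W : Type*} [NormedAddCommGroup W] [NormedSpace ℝ W]
    (T : ℝ) (hT : 0 < T)
    (S : ℝ → W →L[ℝ] W)
    (hS0 : S 0 = ContinuousLinearMap.id ℝ W)
    (hSadd : ∀ t s : ℝ, 0 ≤ t → 0 ≤ s → S (t + s) = (S t).comp (S s))
    (a : ℝ → ℝ → W →L[ℝ] W)
    (hChen : ∀ s τ t : ℝ, 0 ≤ s → s ≤ τ → τ ≤ t → t ≤ T → ∀ x : W,
      a t s x - a t τ x - S (t - τ) (a τ s x) = a t τ (S (τ - s) x - x))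
    (s t : ℝ) (hs : 0 ≤ s) (hst : s ≤ t) (htT : t ≤ T)
    (n : ℕ) (u : ℕ → ℝ) (hu0 : u 0 = s) (hun : u n = t)
    (hmono : ∀ k < n, u k < u (k + 1))
    (x : W) :
    a t s x = ∑ k ∈ Finset.range n,
      S (t - u (k + 1)) (a (u (k + 1)) (u k) (S (u k - s) x)) := by
  induction n generalizing t with
  | zero =>
    have hts : t = s := by rw [← hu0, hun]
    subst hts
    simp only [Finset.range_zero, Finset.sum_empty]
    have h := hChen t t t hs le_rfl le_rfl htT x
    simp only [sub_self, hS0, ContinuousLinearMap.id_apply, sub_self, map_zero] at h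
    rw [zero_sub, neg_eq_zero] at h
    exact h
  | succ n ih =>
    -- monotone chain
    have hmon : ∀ i j : ℕ, i ≤ j → j ≤ n + 1 → u i ≤ u j := by
      intro i j hij hj
      induction j with
      | zero => interval_cases i; exact le_rfl
      | succ m ihm =>
        rcases Nat.lt_or_ge i (m + 1) with h | h
        · exact le_trans (ihm (Nat.lt_succ_iff.mp h) (by omega))
            (hmono m (by omega)).le
        · have : i = m + 1 := le_antisymm hij h
          subst this; exact le_rfl
    set τ := u n with hτ
    have hsτ : s ≤ τ := by rw [← hu0]; exact hmon 0 n (Nat.zero_le _) (by omega)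
    have hτt : τ ≤ t := by rw [← hun]; exact (hmono n (by omega)).le
    have hih := ih τ hsτ (le_trans hτt htT) rfl (fun k hk => hmono k (by omega))
    have hc := hChen s τ t hs hsτ hτt htT x
    rw [map_sub] at hc
    have h2 : a t s x - S (t - τ) (a τ s x) = a t τ (S (τ - s) x) := by
      rw [sub_right_comm] at hc
      exact sub_left_inj.mp hc
    have key : a t s x = S (t - τ) (a τ s x) + a t τ (S (τ - s) x) := by
      rw [← h2]; abel
    rw [key, hih, map_sum, Finset.sum_range_succ, hun]
    congr 1
    · apply Finset.sum_congr rfl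
      intro k hk
      rw [Finset.mem_range] at hk
      have h1 : (0:ℝ) ≤ t - τ := by linarith
      have h2 : (0:ℝ) ≤ τ - u (k + 1) := by
        have := hmon (k + 1) n (by omega) (by omega); linarith
      have := hSadd (t - τ) (τ - u (k + 1)) h1 h2
      have harg : t - τ + (τ - u (k + 1)) = t - u (k + 1) := by ring
      rw [harg] at this
      rw [this, ContinuousLinearMap.comp_apply]
    · rw [sub_self, hS0, ContinuousLinearMap.id_apply]
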